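/- With the notation of the previous setup (H_p-Clifford algebra C with relations {x_{i+k},x_{-i+k}} = a_i x_k^2, a_i ≠ 0, and a 1-dimensional representation φ with φ(x_0)=1, y_j = φ(x_j)): one has a_i^p = 2^p, and y_i is a p-th root of unity. -/

import Mathlib

/-- The relations `x_{i+k} x_{-i+k} + x_{-i+k} x_{i+k} = a_i x_k^2`
(`1 ≤ i ≤ (p-1)/2`, `k ∈ ℤ/p`) of the `H_p`-Clifford algebra. -/
inductive HeisCliffRel (p : ℕ) (a : ZMod p → ℂ) :
    FreeAlgebra ℂ (ZMod p) → FreeAlgebra ℂ (ZMod p) → Prop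
  | of (i k : ZMod p) (h1 : 1 ≤ i.val) (h2 : i.val ≤ (p - 1) / 2) :
      HeisCliffRel p a
        (FreeAlgebra.ι ℂ (k + i) * FreeAlgebra.ι ℂ (k - i) +
          FreeAlgebra.ι ℂ (k - i) * FreeAlgebra.ι ℂ (k + i))
        (a i • (FreeAlgebra.ι ℂ k * FreeAlgebra.ι ℂ k))

/-- The `H_p`-Clifford algebra `C` generated by `x_0,…,x_{p-1}` with relations
`{x_{i+k}, x_{-i+k}} = a_i x_k^2`. -/
noncomputable def HeisClifford (p : ℕ) (a : ZMod p → ℂ) : Type :=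
  RingQuot (HeisCliffRel p a)

noncomputable instance (p : ℕ) (a : ZMod p → ℂ) : Ring (HeisClifford p a) :=
  inferInstanceAs (Ring (RingQuot (HeisCliffRel p a)))

noncomputable instance (p : ℕ) (a : ZMod p → ℂ) : Algebra ℂ (HeisClifford p a) :=
  inferInstanceAs (Algebra ℂ (RingQuot (HeisCliffRel p a)))

/-- The generator `x_j` of the `H_p`-Clifford algebra. -/
noncomputable def heisCliffGen (p : ℕ) (a : ZMod p → ℂ) (j : ZMod p) :
    HeisClifford p a :=
  RingQuot.mkAlgHom ℂ (HeisCliffRel p a) (FreeAlgebra.ι ℂ j)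

def Tfun : ℕ → ℕ
  | 0 => 0
  | m+1 => Tfun m + m

theorem Tfun_two_mul (m : ℕ) : 2 * Tfun m = m * (m - 1) := by
  induction m with
  | zero => rfl
  | succ n ih => simp [Tfun, Nat.mul_add, ih]; cases n <;> simp <;> ring_nf

theorem heisAux (p : ℕ) (hp : p.Prime) (hodd : Odd p) (ai : ℂ) (ha : ai ≠ 0)
    (y : ZMod p → ℂ)
    (i : ZMod p) (hi0 : i ≠ 0)
    (key : ∀ k : ZMod p, 2 * (y (k + i) * y (k - i)) = ai * y k ^ 2)
    (hnz : ∃ j : ZMod p, y j ≠ 0) (h0 : y 0 = 1) :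
    ai ^ p = 2 ^ p ∧ y i ^ p = 1 := by
  haveI : Fact p.Prime := ⟨hp⟩
  -- all values nonzero
  have hstep : ∀ k : ZMod p, y k ≠ 0 → y (k + i) ≠ 0 ∧ y (k - i) ≠ 0 := by
    intro k hk
    have h := key k
    constructor <;> intro h' <;> rw [h'] at h <;>
    · apply hk
      simp only [mul_zero, zero_mul] at h
      have := h.symm
      rcases mul_eq_zero.mp this with h1 | h1
      · exact absurd h1 ha
      · exact pow_eq_zero_iff (by norm_num) |>.mp h1
  have hne : ∀ j : ZMod p, y j ≠ 0 := by
    obtain ⟨j0, hj0⟩ := hnz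
    have hn : ∀ n : ℕ, y (j0 + (n : ZMod p) * i) ≠ 0 := by
      intro n
      induction n with
      | zero => simpa using hj0
      | succ m ih =>
        have := (hstep (j0 + (m : ZMod p) * i) ih).1
        convert this using 2
        push_cast
        ring
    intro j
    have := hn ((j - j0) * i⁻¹).val
    rwa [ZMod.natCast_val, ZMod.cast_id, mul_assoc, inv_mul_cancel₀ hi0, mul_one,
      add_sub_cancel] at this
  set c : ℂ := ai / 2 with hc
  have hc0 : c ≠ 0 := div_ne_zero ha two_ne_zero
  set z : ℕ → ℂ := fun m => y ((m : ZMod p) * i) with hz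
  have hz0 : z 0 = 1 := by simp [hz, h0]
  have hzrel : ∀ m : ℕ, 2 * (z (m + 2) * z m) = ai * z (m + 1) ^ 2 := by
    intro m
    have h := key (((m : ℕ) + 1 : ℕ) * i)
    have e1 : ((m : ℕ) + 1 : ℕ) * (i : ZMod p) + i = ((m + 2 : ℕ) : ZMod p) * i := by
      push_cast; ring
    have e2 : ((m : ℕ) + 1 : ℕ) * (i : ZMod p) - i = ((m : ℕ) : ZMod p) * i := by
      push_cast; ring
    rw [e1, e2] at h
    simpa [hz] using h
  have hz1 : z 1 ≠ 0 := hne _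
  have main : ∀ m : ℕ, z m = c ^ Tfun m * z 1 ^ m ∧
      z (m + 1) = c ^ Tfun (m + 1) * z 1 ^ (m + 1) := by
    intro m
    induction m with
    | zero => simp [hz0, Tfun]
    | succ n ih =>
      obtain ⟨h1, h2⟩ := ih
      refine ⟨h2, ?_⟩
      have hr := hzrel n
      rw [h1, h2] at hr
      have hzn : c ^ Tfun n * z 1 ^ n ≠ 0 := mul_ne_zero (pow_ne_zero _ hc0) (pow_ne_zero _ hz1)
      have hai : ai = 2 * c := by rw [hc]; ring
      rw [hai] at hr
      have : z (n + 2) = c ^ Tfun (n + 2) * z 1 ^ (n + 2) := by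
        have h2ne : (2 : ℂ) ≠ 0 := two_ne_zero
        have goal2 : 2 * (z (n + 2) * (c ^ Tfun n * z 1 ^ n)) =
            2 * (c ^ Tfun (n + 2) * z 1 ^ (n + 2) * (c ^ Tfun n * z 1 ^ n)) := by
          rw [hr]
          simp only [Tfun]
          ring
        have := mul_left_cancel₀ h2ne goal2
        exact mul_right_cancel₀ hzn this
      exact this
  -- evaluate at p and p+1
  have hzp : z p = 1 := by simp [hz, ZMod.natCast_self, h0]
  have hzp1 : z (p + 1) = z 1 := by
    have : ((p + 1 : ℕ) : ZMod p) = (1 : ℕ) := by push_cast [ZMod.natCast_self]; ring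
    simp [hz, this]
  have e1 : c ^ Tfun p * z 1 ^ p = 1 := by rw [← (main p).1, hzp]
  have e2 : c ^ Tfun (p + 1) * z 1 ^ p = 1 := by
    have := (main p).2
    rw [hzp1] at this
    have h3 : z 1 * (c ^ Tfun (p + 1) * z 1 ^ p) = z 1 * 1 := by
      rw [mul_one]
      calc z 1 * (c ^ Tfun (p + 1) * z 1 ^ p) = c ^ Tfun (p + 1) * z 1 ^ (p + 1) := by ring
        _ = z 1 := this.symm
    exact mul_left_cancel₀ hz1 h3
  have hcp : c ^ p = 1 := by
    have : c ^ Tfun (p + 1) * z 1 ^ p = c ^ p * (c ^ Tfun p * z 1 ^ p) := by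
      simp only [Tfun]; ring
    rw [e1, e2, mul_one] at this
    exact this.symm
  have haip : ai ^ p = 2 ^ p := by
    have : (ai / 2) ^ p = 1 := hcp
    rw [div_pow] at this
    field_simp at this
    exact this
  refine ⟨haip, ?_⟩
  -- Tfun p = p * ((p-1)/2)
  have hq : p - 1 = 2 * ((p - 1) / 2) := by
    obtain ⟨t, ht⟩ := hodd; omega
  set q := (p - 1) / 2 with hqdef
  have hTp : Tfun p = p * q := by
    have h2 := Tfun_two_mul p
    have h3 : p * (p - 1) = 2 * (p * q) := by rw [hq]; ring
    omega
  have hcTp : c ^ Tfun p = 1 := by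
    rw [hTp, pow_mul, hcp, one_pow]
  have hz1p : z 1 ^ p = 1 := by rwa [hcTp, one_mul] at e1
  have : z 1 = y i := by simp [hz]
  rwa [this] at hz1p

/-- With the notation of the previous setup (`H_p`-Clifford algebra `C`
with relations `{x_{i+k}, x_{-i+k}} = a_i x_k^2`, `a_i ≠ 0`, and a 1-dimensional
representation `φ` with `φ(x_0) = 1`, `y_j = φ(x_j)`): one has `a_i^p = 2^p`, and `y_i`
is a `p`-th root of unity. -/
theorem heisenberg_clifford_one_dim_rep_root_of_unity (p : ℕ) (hp : p.Prime)
    (hodd : Odd p)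
    (a : ZMod p → ℂ) (i : ZMod p) (hi1 : 1 ≤ i.val) (hi2 : i.val ≤ (p - 1) / 2)
    (ha : a i ≠ 0) (φ : HeisClifford p a →ₐ[ℂ] ℂ)
    (hnz : ∃ j : ZMod p, φ (heisCliffGen p a j) ≠ 0)
    (h0 : φ (heisCliffGen p a 0) = 1) :
    a i ^ p = 2 ^ p ∧ φ (heisCliffGen p a i) ^ p = 1 := by
  haveI : Fact p.Prime := ⟨hp⟩
  have hi0 : i ≠ 0 := by
    intro h
    rw [h] at hi1
    simp [ZMod.val_zero] at hi1
  have key : ∀ k : ZMod p,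
      2 * (φ (heisCliffGen p a (k + i)) * φ (heisCliffGen p a (k - i))) =
        a i * φ (heisCliffGen p a k) ^ 2 := by
    intro k
    have h := RingQuot.mkAlgHom_rel ℂ (HeisCliffRel.of (a := a) i k hi1 hi2)
    have h2 := congrArg φ h
    replace h2 : φ (heisCliffGen p a (k + i) * heisCliffGen p a (k - i) +
        heisCliffGen p a (k - i) * heisCliffGen p a (k + i)) =
        φ (a i • (heisCliffGen p a k * heisCliffGen p a k)) := by
      rw [map_add, map_mul, map_mul, map_smul, map_mul] at h2; exact h2
    simp only [map_add, map_mul, map_smul, smul_eq_mul] at h2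
    simp only [heisCliffGen]
    ring_nf
    ring_nf at h2
    exact h2
  exact heisAux p hp hodd (a i) ha (fun j => φ (heisCliffGen p a j)) i hi0 key hnz h0
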